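/- Let P be a finite (3+1)-free poset. A P-array T is a highest weight element of the P-array crystal (i.e., e_r(T) = 0 for all r ≥ 1) if and only if T is a P-tableau. -/

import Mathlib

/-- Two elements of a poset are incomparable. -/
def Incomp {α : Type*} [Preorder α] (x y : α) : Prop := ¬ x ≤ y ∧ ¬ y ≤ x

/-- A poset is (3+1)-free. -/
def ThreePlusOneFree (α : Type*) [Preorder α] : Prop :=
  ¬ ∃ a b c d : α, a < b ∧ b < c ∧ Incomp d a ∧ Incomp d b ∧ Incomp d c

/-- A `P`-array: an indexing of the elements of `P` by positions `(i,j)` (rows and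
columns, indexed from 0) in which every element appears exactly once and each row
is increasing from left to right with no gaps. -/
structure PArray (P : Type*) [PartialOrder P] where
  entry : ℕ → ℕ → Option P
  exists_unique : ∀ x : P, ∃! ij : ℕ × ℕ, entry ij.1 ij.2 = some x
  row_chain : ∀ i j x, entry i (j + 1) = some x → ∃ y, entry i j = some y ∧ y < x

/-- `x` is an entry of row `i` of the `P`-array `T`. -/
def InRow {P : Type*} [PartialOrder P] (T : PArray P) (i : ℕ) (x : P) : Prop :=
  ∃ j, T.entry i j = some x

/-- A weak `r` alignment of rows `r` and `r+1` of a `P`-array `T`, recorded by the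
column assignment `γ` of the elements of those two rows (columns indexed from 0):
(1) columns strictly increase along each of the two rows; (2) no occupied column is
preceded by an empty one; (3) if `x <_P y` with `x` in row `r+1` and `y` in row `r`
then `x` is strictly left of `y`; (4) if an element lies in column `c` and column
`c+1` is nonempty then some greater element lies in column `c+1`. -/
def WeakAlignRow {P : Type*} [PartialOrder P] (T : PArray P) (r : ℕ) (γ : P → ℕ) :
    Prop :=
  (∀ x y, InRow T r x → InRow T r y → x < y → γ x < γ y) ∧
  (∀ x y, InRow T (r + 1) x → InRow T (r + 1) y → x < y → γ x < γ y) ∧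
  (∀ c : ℕ, 0 < c → (∃ x, (InRow T r x ∨ InRow T (r + 1) x) ∧ γ x = c) →
    ∃ x, (InRow T r x ∨ InRow T (r + 1) x) ∧ γ x = c - 1) ∧
  (∀ x y, InRow T (r + 1) x → InRow T r y → x < y → γ x < γ y) ∧
  (∀ x, (InRow T r x ∨ InRow T (r + 1) x) →
    (∃ z, (InRow T r z ∨ InRow T (r + 1) z) ∧ γ z = γ x + 1) →
    ∃ y, (InRow T r y ∨ InRow T (r + 1) y) ∧ γ y = γ x + 1 ∧ x < y)


namespace Stmt14Aux

open Classical in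
/-- cell types -/
inductive Cell | A | B | AB
deriving DecidableEq

section Core

variable {P : Type*} [PartialOrder P] (A B : ℕ → P) (m n : ℕ)

open Classical in
/-- decision function for the minimal alignment -/
noncomputable def Dcell : ℕ → ℕ → Cell
  | k, l =>
    if l < n then
      if k < m then
        if B l < A k then .B
        else if (Dcell (k+1) (l+1) = .A ∧ k+1 < m ∧ ¬ B l < A (k+1)) ∨
                (Dcell (k+1) (l+1) = .B ∧ ¬ A k < B (l+1)) then
          (if Dcell (k+1) l = .B ∧ ¬ A k < B l then .B else .A)
        else .AB
      else .B
    else .A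
termination_by k l => (m - k) + (n - l)
decreasing_by all_goals omega

/-- the "pairing is blocked" predicate -/
def Notok (k l : ℕ) : Prop :=
  (Dcell A B m n (k+1) (l+1) = .A ∧ k+1 < m ∧ ¬ B l < A (k+1)) ∨
  (Dcell A B m n (k+1) (l+1) = .B ∧ ¬ A k < B (l+1))

lemma Dcell_cases (k l : ℕ) :
    (n ≤ l ∧ Dcell A B m n k l = .A) ∨
    (l < n ∧ m ≤ k ∧ Dcell A B m n k l = .B) ∨
    (l < n ∧ k < m ∧ B l < A k ∧ Dcell A B m n k l = .B) ∨
    (l < n ∧ k < m ∧ ¬ B l < A k ∧ ¬ Notok A B m n k l ∧ Dcell A B m n k l = .AB) ∨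
    (l < n ∧ k < m ∧ ¬ B l < A k ∧ Notok A B m n k l ∧
      ¬ (Dcell A B m n (k+1) l = .B ∧ ¬ A k < B l) ∧ Dcell A B m n k l = .A) ∨
    (l < n ∧ k < m ∧ ¬ B l < A k ∧ Notok A B m n k l ∧
      Dcell A B m n (k+1) l = .B ∧ ¬ A k < B l ∧ Dcell A B m n k l = .B) := by
  rw [Dcell]
  by_cases h1 : l < n
  · by_cases h2 : k < m
    · by_cases h3 : B l < A k
      · simp [h1, h2, h3]
      · by_cases h4 : Notok A B m n k l
        · by_cases h5 : Dcell A B m n (k+1) l = .B ∧ ¬ A k < B l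
          · refine Or.inr (Or.inr (Or.inr (Or.inr (Or.inr ⟨h1, h2, h3, h4, h5.1, h5.2, ?_⟩))))
            simp only [if_pos h1, if_pos h2, if_neg h3]
            rw [if_pos, if_pos h5]
            exact h4
          · refine Or.inr (Or.inr (Or.inr (Or.inr (Or.inl ⟨h1, h2, h3, h4, h5, ?_⟩))))
            simp only [if_pos h1, if_pos h2, if_neg h3]
            rw [if_pos, if_neg h5]
            exact h4
        · refine Or.inr (Or.inr (Or.inr (Or.inl ⟨h1, h2, h3, h4, ?_⟩)))
          simp only [if_pos h1, if_pos h2, if_neg h3]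
          rw [if_neg]
          exact h4
    · simp [h1, h2, Nat.le_of_not_lt]
  · simp [h1, Nat.le_of_not_lt]

lemma Dcell_of_le (k l : ℕ) (h : n ≤ l) : Dcell A B m n k l = .A := by
  rw [Dcell]; simp [Nat.not_lt.2 h]

lemma Dcell_B_lt_n {k l : ℕ} (h : Dcell A B m n k l = .B) : l < n := by
  rcases Dcell_cases A B m n k l with ⟨_, h'⟩|⟨h1,_,_⟩|⟨h1,_,_,_⟩|⟨h1,_,_,_,h'⟩|⟨h1,_,_,_,_,h'⟩|⟨h1,_⟩ <;>
    first | exact h1 | (rw [h'] at h; cases h)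

lemma Dcell_A_lt_m {k l : ℕ} (h : Dcell A B m n k l = .A) (hl : l < n) : k < m := by
  rcases Dcell_cases A B m n k l with ⟨h1, _⟩|⟨_,_,h'⟩|⟨_,_,_,h'⟩|⟨_,h2,_,_,h'⟩|⟨_,h2,_⟩|⟨_,_,_,_,_,_,h'⟩
  · omega
  · rw [h'] at h; cases h
  · rw [h'] at h; cases h
  · rw [h'] at h; cases h
  · exact h2
  · rw [h'] at h; cases h

lemma Dcell_AB_lt {k l : ℕ} (h : Dcell A B m n k l = .AB) :
    l < n ∧ k < m ∧ ¬ B l < A k ∧ ¬ Notok A B m n k l := by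
  rcases Dcell_cases A B m n k l with ⟨_, h'⟩|⟨_,_,h'⟩|⟨_,_,_,h'⟩|⟨h1,h2,h3,h4,h'⟩|⟨_,_,_,_,_,h'⟩|⟨_,_,_,_,_,_,h'⟩ <;>
    first | (exact ⟨h1,h2,h3,h4⟩) | (rw [h'] at h; cases h)

lemma Dcell_not_B {k l : ℕ} (h : Dcell A B m n k l ≠ .B) (hl : l < n) :
    k < m ∧ ¬ B l < A k := by
  rcases Dcell_cases A B m n k l with ⟨h1, _⟩|⟨_,_,h'⟩|⟨_,_,_,h'⟩|⟨_,h2,h3,_,_⟩|⟨_,h2',h3,_⟩|⟨_,_,_,_,_,_,h'⟩ <;>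
    first | omega | (exact absurd h' h) | (exact ⟨h2, h3⟩) | (exact ⟨h2', h3⟩)

lemma Dcell_A_facts {k l : ℕ} (h : Dcell A B m n k l = .A) (hl : l < n) :
    k < m ∧ ¬ B l < A k ∧ Notok A B m n k l ∧
      ¬ (Dcell A B m n (k+1) l = .B ∧ ¬ A k < B l) := by
  rcases Dcell_cases A B m n k l with ⟨h1, _⟩|⟨_,_,h'⟩|⟨_,_,_,h'⟩|⟨_,_,_,_,h'⟩|⟨_,h2,h3,h4,h5,_⟩|⟨_,_,_,_,_,_,h'⟩ <;>
    first | omega | (rw [h'] at h; cases h) | (exact ⟨h2, h3, h4, h5⟩)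

lemma Dcell_B_facts {k l : ℕ} (h : Dcell A B m n k l = .B) (hk : k < m) :
    B l < A k ∨ (¬ B l < A k ∧ Notok A B m n k l ∧
      Dcell A B m n (k+1) l = .B ∧ ¬ A k < B l) := by
  rcases Dcell_cases A B m n k l with ⟨_, h'⟩|⟨_,h2,_⟩|⟨_,_,h3,_⟩|⟨_,_,_,_,h'⟩|⟨_,_,_,_,_,h'⟩|⟨_,_,h3,h4,h5,h6,_⟩ <;>
    first | omega | (rw [h'] at h; cases h) | (exact Or.inl h3) | (exact Or.inr ⟨h3, h4, h5, h6⟩)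

end Core
section Walk

variable {P : Type*} [PartialOrder P] (A B : ℕ → P) (m n : ℕ)

/-- one step of the walk -/
noncomputable def stepw (s : ℕ × ℕ) : ℕ × ℕ :=
  if m ≤ s.1 ∧ n ≤ s.2 then s
  else match Dcell A B m n s.1 s.2 with
    | .A => (s.1 + 1, s.2)
    | .B => (s.1, s.2 + 1)
    | .AB => (s.1 + 1, s.2 + 1)

/-- the walk -/
noncomputable def st : ℕ → ℕ × ℕ
  | 0 => (0, 0)
  | c + 1 => stepw A B m n (st c)

lemma stepw_cases (s : ℕ × ℕ) :
    (m ≤ s.1 ∧ n ≤ s.2 ∧ stepw A B m n s = s) ∨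
    (¬ (m ≤ s.1 ∧ n ≤ s.2) ∧
      ((Dcell A B m n s.1 s.2 = .A ∧ stepw A B m n s = (s.1 + 1, s.2)) ∨
       (Dcell A B m n s.1 s.2 = .B ∧ stepw A B m n s = (s.1, s.2 + 1)) ∨
       (Dcell A B m n s.1 s.2 = .AB ∧ stepw A B m n s = (s.1 + 1, s.2 + 1)))) := by
  by_cases h : m ≤ s.1 ∧ n ≤ s.2
  · exact Or.inl ⟨h.1, h.2, by rw [stepw, if_pos h]⟩
  · refine Or.inr ⟨h, ?_⟩
    rcases hD : Dcell A B m n s.1 s.2 with _ | _ | _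
    · exact Or.inl ⟨rfl, by rw [stepw, if_neg h, hD]⟩
    · exact Or.inr (Or.inl ⟨rfl, by rw [stepw, if_neg h, hD]⟩)
    · exact Or.inr (Or.inr ⟨rfl, by rw [stepw, if_neg h, hD]⟩)

lemma st_succ (c : ℕ) : st A B m n (c+1) = stepw A B m n (st A B m n c) := rfl

lemma st_bounds : ∀ c, (st A B m n c).1 ≤ m ∧ (st A B m n c).2 ≤ n := by
  intro c
  induction c with
  | zero => exact ⟨Nat.zero_le _, Nat.zero_le _⟩
  | succ c ih =>
    rw [st_succ]
    rcases stepw_cases A B m n (st A B m n c) with ⟨_,_,he⟩|⟨hne, hc⟩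
    · rw [he]; exact ih
    · rcases hc with ⟨hD,he⟩|⟨hD,he⟩|⟨hD,he⟩ <;> rw [he]
      · by_cases hl : (st A B m n c).2 < n
        · have := Dcell_A_lt_m A B m n hD hl
          exact ⟨by omega, by simpa using ih.2⟩
        · have hk : ¬ m ≤ (st A B m n c).1 := fun h => hne ⟨h, Nat.le_of_not_lt hl⟩
          exact ⟨by omega, by simpa using ih.2⟩
      · have := Dcell_B_lt_n A B m n hD
        exact ⟨by simpa using ih.1, by omega⟩
      · have h2 := Dcell_AB_lt A B m n hD
        exact ⟨by omega, by omega⟩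

lemma st_end_succ {c : ℕ} (h : st A B m n c = (m, n)) :
    st A B m n (c + 1) = (m, n) := by
  show stepw A B m n _ = _
  rw [h, stepw, if_pos ⟨le_refl _, le_refl _⟩]

lemma st_fst_mono_succ (c : ℕ) : (st A B m n c).1 ≤ (st A B m n (c+1)).1 ∧
    (st A B m n (c+1)).1 ≤ (st A B m n c).1 + 1 ∧
    (st A B m n c).2 ≤ (st A B m n (c+1)).2 ∧
    (st A B m n (c+1)).2 ≤ (st A B m n c).2 + 1 := by
  rw [st_succ]
  rcases stepw_cases A B m n (st A B m n c) with ⟨_,_,he⟩|⟨hne, hc⟩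
  · rw [he]; omega
  · rcases hc with ⟨hD,he⟩|⟨hD,he⟩|⟨hD,he⟩ <;> rw [he] <;> simp <;> omega

lemma st_fst_mono {c c' : ℕ} (h : c ≤ c') : (st A B m n c).1 ≤ (st A B m n c').1 := by
  induction c' with
  | zero => have : c = 0 := by omega
            rw [this]
  | succ c' ih =>
    rcases Nat.lt_or_ge c (c'+1) with hlt | hge
    · exact le_trans (ih (by omega)) (st_fst_mono_succ A B m n c').1
    · have : c = c' + 1 := by omega
      rw [this]

lemma st_snd_mono {c c' : ℕ} (h : c ≤ c') : (st A B m n c).2 ≤ (st A B m n c').2 := by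
  induction c' with
  | zero => have : c = 0 := by omega
            rw [this]
  | succ c' ih =>
    rcases Nat.lt_or_ge c (c'+1) with hlt | hge
    · exact le_trans (ih (by omega)) (st_fst_mono_succ A B m n c').2.2.1
    · have : c = c' + 1 := by omega
      rw [this]

lemma st_progress : ∀ c, st A B m n c = (m, n) ∨ c ≤ (st A B m n c).1 + (st A B m n c).2 := by
  intro c
  induction c with
  | zero => right; omega
  | succ c ih =>
    rcases ih with he | hge
    · exact Or.inl (st_end_succ A B m n he)
    · rcases stepw_cases A B m n (st A B m n c) with ⟨h1,h2,he⟩|⟨hne, hc⟩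
      · left
        have hb := st_bounds A B m n c
        have h1' : (st A B m n c).1 = m := le_antisymm hb.1 h1
        have h2' : (st A B m n c).2 = n := le_antisymm hb.2 h2
        exact st_end_succ A B m n (Prod.ext h1' h2')
      · right
        show (stepw A B m n _).1 + (stepw A B m n _).2 ≥ c + 1
        rcases hc with ⟨hD,he⟩|⟨hD,he⟩|⟨hD,he⟩ <;> rw [he] <;> simp <;> omega

lemma st_final : st A B m n (m + n) = (m, n) := by
  rcases st_progress A B m n (m+n) with h | h
  · exact h
  · have hb := st_bounds A B m n (m+n)
    have h1 : (st A B m n (m+n)).1 = m := by omega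
    have h2 : (st A B m n (m+n)).2 = n := by omega
    exact Prod.ext h1 h2

lemma st_end_mono {c c' : ℕ} (h : c ≤ c') (he : st A B m n c = (m, n)) :
    st A B m n c' = (m, n) := by
  induction c' with
  | zero => have : c = 0 := by omega
            rw [← this]; exact he
  | succ c' ih =>
    rcases Nat.lt_or_ge c (c'+1) with hlt | hge
    · exact st_end_succ A B m n (ih (by omega))
    · have : c = c' + 1 := by omega
      rw [← this]; exact he

/-- the walk hits every value `v ≤ m` in the first coordinate -/
lemma st_fst_hit {v : ℕ} (hv : v ≤ m) : ∃ c, (st A B m n c).1 = v := by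
  have hex : ∃ c, v ≤ (st A B m n c).1 := ⟨m + n, by rw [st_final]; exact hv⟩
  classical
  set c0 := Nat.find hex with hc0
  have h1 : v ≤ (st A B m n c0).1 := Nat.find_spec hex
  rcases Nat.eq_zero_or_pos c0 with h0 | hpos
  · refine ⟨0, ?_⟩
    rw [h0] at h1
    show (st A B m n 0).1 = v
    have : (st A B m n 0).1 = 0 := rfl
    omega
  · have h2 : ¬ v ≤ (st A B m n (c0 - 1)).1 := Nat.find_min hex (by omega)
    have h3 := (st_fst_mono_succ A B m n (c0 - 1)).2.1
    have : c0 - 1 + 1 = c0 := by omega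
    rw [this] at h3
    exact ⟨c0, by omega⟩

lemma st_snd_hit {v : ℕ} (hv : v ≤ n) : ∃ c, (st A B m n c).2 = v := by
  have hex : ∃ c, v ≤ (st A B m n c).2 := ⟨m + n, by rw [st_final]; exact hv⟩
  classical
  set c0 := Nat.find hex with hc0
  have h1 : v ≤ (st A B m n c0).2 := Nat.find_spec hex
  rcases Nat.eq_zero_or_pos c0 with h0 | hpos
  · refine ⟨0, ?_⟩
    rw [h0] at h1
    show (st A B m n 0).2 = v
    have : (st A B m n 0).2 = 0 := rfl
    omega
  · have h2 : ¬ v ≤ (st A B m n (c0 - 1)).2 := Nat.find_min hex (by omega)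
    have h3 := (st_fst_mono_succ A B m n (c0 - 1)).2.2.2
    have : c0 - 1 + 1 = c0 := by omega
    rw [this] at h3
    exact ⟨c0, by omega⟩

open Classical in
/-- column of the `j`-th entry of row `r` in the minimal alignment -/
noncomputable def colA (j : ℕ) : ℕ :=
  if h : j < m then Nat.find (st_fst_hit A B m n (show j + 1 ≤ m by omega)) - 1 else 0

open Classical in
noncomputable def colB (l : ℕ) : ℕ :=
  if h : l < n then Nat.find (st_snd_hit A B m n (show l + 1 ≤ n by omega)) - 1 else 0

lemma colA_spec {j : ℕ} (hj : j < m) :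
    (st A B m n (colA A B m n j)).1 = j ∧ (st A B m n (colA A B m n j + 1)).1 = j + 1 := by
  classical
  rw [colA, dif_pos hj]
  set hex := st_fst_hit A B m n (show j + 1 ≤ m by omega)
  set c0 := Nat.find hex with hc0
  have h1 : (st A B m n c0).1 = j + 1 := Nat.find_spec hex
  have hpos : 0 < c0 := by
    rcases Nat.eq_zero_or_pos c0 with h0 | h
    · rw [h0] at h1
      have : (st A B m n 0).1 = 0 := rfl
      omega
    · exact h
  have h2 : (st A B m n (c0 - 1)).1 ≠ j + 1 := Nat.find_min hex (by omega)
  have h3 := st_fst_mono_succ A B m n (c0 - 1)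
  have he : c0 - 1 + 1 = c0 := by omega
  rw [he] at h3
  constructor
  · omega
  · rw [he]; omega

lemma colB_spec {l : ℕ} (hl : l < n) :
    (st A B m n (colB A B m n l)).2 = l ∧ (st A B m n (colB A B m n l + 1)).2 = l + 1 := by
  classical
  rw [colB, dif_pos hl]
  set hex := st_snd_hit A B m n (show l + 1 ≤ n by omega)
  set c0 := Nat.find hex with hc0
  have h1 : (st A B m n c0).2 = l + 1 := Nat.find_spec hex
  have hpos : 0 < c0 := by
    rcases Nat.eq_zero_or_pos c0 with h0 | h
    · rw [h0] at h1
      have : (st A B m n 0).2 = 0 := rfl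
      omega
    · exact h
  have h2 : (st A B m n (c0 - 1)).2 ≠ l + 1 := Nat.find_min hex (by omega)
  have h3 := st_fst_mono_succ A B m n (c0 - 1)
  have he : c0 - 1 + 1 = c0 := by omega
  rw [he] at h3
  constructor
  · omega
  · rw [he]; omega

/-- uniqueness of the crossing cell -/
lemma colA_eq {c : ℕ} (h : (st A B m n (c+1)).1 = (st A B m n c).1 + 1) :
    colA A B m n (st A B m n c).1 = c := by
  classical
  have hj : (st A B m n c).1 < m := by
    have := (st_bounds A B m n (c+1)).1; omega
  have h1 := colA_spec A B m n hj
  set d := colA A B m n (st A B m n c).1 with hd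
  by_contra hne
  rcases Nat.lt_or_ge d c with hlt | hge
  · have := st_fst_mono A B m n (show d + 1 ≤ c by omega)
    omega
  · have hgt : c < d := by omega
    have := st_fst_mono A B m n (show c + 1 ≤ d by omega)
    omega

lemma colB_eq {c : ℕ} (h : (st A B m n (c+1)).2 = (st A B m n c).2 + 1) :
    colB A B m n (st A B m n c).2 = c := by
  classical
  have hj : (st A B m n c).2 < n := by
    have := (st_bounds A B m n (c+1)).2; omega
  have h1 := colB_spec A B m n hj
  set d := colB A B m n (st A B m n c).2 with hd
  by_contra hne
  rcases Nat.lt_or_ge d c with hlt | hge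
  · have := st_snd_mono A B m n (show d + 1 ≤ c by omega)
    omega
  · have hgt : c < d := by omega
    have := st_snd_mono A B m n (show c + 1 ≤ d by omega)
    omega

lemma colA_lt_colA {j j' : ℕ} (hjj : j < j') (hj' : j' < m) :
    colA A B m n j < colA A B m n j' := by
  have h1 := colA_spec A B m n (show j < m by omega)
  have h2 := colA_spec A B m n hj'
  by_contra hc
  have := st_fst_mono A B m n (Nat.le_of_not_lt hc)
  omega

lemma colB_lt_colB {l l' : ℕ} (hll : l < l') (hl' : l' < n) :
    colB A B m n l < colB A B m n l' := by
  have h1 := colB_spec A B m n (show l < n by omega)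
  have h2 := colB_spec A B m n hl'
  by_contra hc
  have := st_snd_mono A B m n (Nat.le_of_not_lt hc)
  omega

end Walk
section MinCore

variable {P : Type*} [PartialOrder P] (A B : ℕ → P) (m n : ℕ)

/-- abstract data of a weak alignment of the two rows -/
structure AlData where
  gA : ℕ → ℕ
  gB : ℕ → ℕ
  w1 : ∀ j j', j < j' → j' < m → gA j < gA j'
  w2 : ∀ l l', l < l' → l' < n → gB l < gB l'
  w4 : ∀ l j, l < n → j < m → B l < A j → gB l < gA j
  w3 : ∀ c, 0 < c → ((∃ j, j < m ∧ gA j = c) ∨ (∃ l, l < n ∧ gB l = c)) →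
       ((∃ j, j < m ∧ gA j = c - 1) ∨ (∃ l, l < n ∧ gB l = c - 1))
  w5A : ∀ j, j < m → ((∃ j', j' < m ∧ gA j' = gA j + 1) ∨ (∃ l', l' < n ∧ gB l' = gA j + 1)) →
        ((∃ j', j' < m ∧ gA j' = gA j + 1 ∧ A j < A j') ∨
         (∃ l', l' < n ∧ gB l' = gA j + 1 ∧ A j < B l'))
  w5B : ∀ l, l < n → ((∃ j', j' < m ∧ gA j' = gB l + 1) ∨ (∃ l', l' < n ∧ gB l' = gB l + 1)) →
        ((∃ j', j' < m ∧ gA j' = gB l + 1 ∧ B l < A j') ∨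
         (∃ l', l' < n ∧ gB l' = gB l + 1 ∧ B l < B l'))

variable {A B m n}

def AlData.occ (W : AlData A B m n) (c : ℕ) : Prop :=
  (∃ j, j < m ∧ W.gA j = c) ∨ (∃ l, l < n ∧ W.gB l = c)

lemma AlData.occ_le (W : AlData A B m n) {c e : ℕ} (h : W.occ c) (he : e ≤ c) : W.occ e := by
  obtain ⟨d, rfl⟩ : ∃ d, c = e + d := ⟨c - e, by omega⟩
  clear he
  induction d with
  | zero => exact h
  | succ d ihd =>
    apply ihd
    have := W.w3 (e + (d+1)) (by omega) h
    simpa [AlData.occ] using this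

lemma AlData.gA_add (W : AlData A B m n) {j : ℕ} (d : ℕ) (h : j + d < m) :
    W.gA j + d ≤ W.gA (j + d) := by
  induction d with
  | zero => simp
  | succ d ihd =>
    have h1 := W.w1 (j + d) (j + d + 1) (by omega) (by omega)
    have := ihd (by omega)
    have he : j + (d + 1) = j + d + 1 := by omega
    rw [he]
    omega

lemma AlData.gB_add (W : AlData A B m n) {l : ℕ} (d : ℕ) (h : l + d < n) :
    W.gB l + d ≤ W.gB (l + d) := by
  induction d with
  | zero => simp
  | succ d ihd =>
    have h1 := W.w2 (l + d) (l + d + 1) (by omega) (by omega)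
    have := ihd (by omega)
    have he : l + (d + 1) = l + d + 1 := by omega
    rw [he]
    omega

variable (hA : ∀ j j', j < j' → j' < m → A j < A j') (hB : ∀ l l', l < l' → l' < n → B l < B l')

include hA in
lemma A_reflect {j j' : ℕ} (hj : j < m) (hj' : j' < m) (h : A j < A j') : j < j' := by
  by_contra hc
  rcases Nat.lt_or_ge j' j with h1 | h1
  · exact absurd (hA j' j h1 hj) (lt_asymm h)
  · have : j = j' := by omega
    rw [this] at h; exact lt_irrefl _ h

include hB in
lemma B_reflect {l l' : ℕ} (hl : l < n) (hl' : l' < n) (h : B l < B l') : l < l' := by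
  by_contra hc
  rcases Nat.lt_or_ge l' l with h1 | h1
  · exact absurd (hB l' l h1 hl) (lt_asymm h)
  · have : l = l' := by omega
    rw [this] at h; exact lt_irrefl _ h

include hA hB in
/-- Key minimality lemma: if the decision at `(k,l)` is `A` then in every weak alignment
the `k`-th entry of the top row is strictly left of the `l`-th entry of the bottom row;
dually for `B`. -/
lemma ICID (W : AlData A B m n) :
    ∀ μ k l, (m - k) + (n - l) = μ → k < m → l < n →
      (Dcell A B m n k l = .A → W.gA k < W.gB l) ∧
      (Dcell A B m n k l = .B → W.gB l < W.gA k) := by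
  intro μ
  induction μ using Nat.strong_induction_on with
  | _ μ ih =>
  intro k l hμ hk hl
  constructor
  · -- IC : Dcell = .A → gA k < gB l
    intro hD
    by_contra hcon
    have h : W.gB l ≤ W.gA k := by omega
    set c := W.gB l with hc
    obtain ⟨_, hnbl, hnot, hguard⟩ := Dcell_A_facts A B m n hD hl
    -- k+1 < m
    have hk1 : k + 1 < m := by
      by_cases hG : Dcell A B m n (k+1) l = .B
      · have hab : A k < B l := by
          by_contra hab
          exact hguard ⟨hG, hab⟩
        rcases hnot with ⟨hA1, hk1, _⟩ | ⟨hB2, hnab⟩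
        · exact hk1
        · have hl1 : l + 1 < n := Dcell_B_lt_n A B m n hB2
          exact absurd (lt_trans hab (hB l (l+1) (by omega) hl1)) hnab
      · exact (Dcell_not_B A B m n hG hl).1
    -- occupancy of column c+1
    have hocc : W.occ (c + 1) := by
      have h1 := W.w1 k (k+1) (by omega) hk1
      exact W.occ_le (Or.inl ⟨k+1, hk1, rfl⟩) (by omega)
    -- apply w5B
    rcases W.w5B l hl hocc with ⟨j'', hj'', hcol, hblt⟩ | ⟨l'', hl'', hcol, hblt⟩
    · -- y = A j'' with B l < A j''
      have hkj : k < j'' := by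
        rcases Nat.lt_or_ge j'' (k+1) with h1 | h1
        · rcases Nat.lt_or_ge j'' k with h2 | h2
          · exact absurd (lt_trans hblt (hA j'' k h2 hk)) hnbl
          · have : j'' = k := by omega
            rw [this] at hblt; exact absurd hblt hnbl
        · omega
      have hj1 : j'' = k + 1 ∧ W.gA k = c := by
        have := W.gA_add (j'' - k) (by omega : k + (j'' - k) < m)
        have he : k + (j'' - k) = j'' := by omega
        rw [he] at this
        omega
      obtain ⟨rfl, hgak⟩ := hj1
      -- B l < A (k+1), gA (k+1) = c+1, gA k = c
      have hG : Dcell A B m n (k+1) l = .B := by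
        rcases Dcell_cases A B m n (k+1) l with ⟨h1, _⟩|⟨_,_,h'⟩|⟨_,_,_,h'⟩|⟨_,_,h3,_,_⟩|⟨_,_,h3,_⟩|⟨_,_,h3,_⟩
        · omega
        · exact h'
        · exact h'
        · exact absurd hblt h3
        · exact absurd hblt h3
        · exact absurd hblt h3
      have hab : A k < B l := by
        by_contra hab
        exact hguard ⟨hG, hab⟩
      rcases hnot with ⟨_, _, hnb1⟩ | ⟨hB2, hnab⟩
      · exact hnb1 hblt
      · have hl1 : l + 1 < n := Dcell_B_lt_n A B m n hB2
        exact absurd (lt_trans hab (hB l (l+1) (by omega) hl1)) hnab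
    · -- y = B l'' with B l < B l''
      have hll : l < l'' := B_reflect hB hl hl'' hblt
      have hl1 : l'' = l + 1 := by
        have := W.gB_add (l'' - l) (by omega : l + (l'' - l) < n)
        have he : l + (l'' - l) = l'' := by omega
        rw [he] at this
        omega
      subst hl1
      -- gB (l+1) = c + 1, l+1 < n
      rcases hnot with ⟨hA1, hk1', hnb1⟩ | ⟨hB2, hnab⟩
      · -- IH IC (k+1, l+1)
        have := (ih ((m - (k+1)) + (n - (l+1))) (by omega) (k+1) (l+1) rfl hk1 hl'').1 hA1
        have h2 := W.w1 k (k+1) (by omega) hk1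
        omega
      · -- Dcell (k+1)(l+1) = .B
        have := (ih ((m - (k+1)) + (n - (l+1))) (by omega) (k+1) (l+1) rfl hk1 hl'').2 hB2
        by_cases hG : Dcell A B m n (k+1) l = .B
        · have hab : A k < B l := by
            by_contra hab
            exact hguard ⟨hG, hab⟩
          exact absurd (lt_trans hab (hB l (l+1) (by omega) hl'')) hnab
        · rcases hG2 : Dcell A B m n (k+1) l with _ | _ | _
          · -- Dcell (k+1) l = .A : IH IC (k+1, l)
            have := (ih ((m - (k+1)) + (n - l)) (by omega) (k+1) l rfl hk1 hl).1 hG2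
            have h2 := W.w1 k (k+1) (by omega) hk1
            omega
          · exact hG hG2
          · -- Dcell (k+1) l = .AB
            obtain ⟨_, _, hnba1, hnotok1⟩ := Dcell_AB_lt A B m n hG2
            rcases Dcell_B_facts A B m n hB2 hk1 with h1 | ⟨_, _, hB3, hna2⟩
            · exact hnba1 (lt_trans (hB l (l+1) (by omega) hl'') h1)
            · exact hnotok1 (Or.inr ⟨hB3, hna2⟩)
  · -- ID : Dcell = .B → gB l < gA k
    intro hD
    by_contra hcon
    have h : W.gA k ≤ W.gB l := by omega
    set c := W.gA k with hc
    rcases Dcell_B_facts A B m n hD hk with hblt | ⟨hnbl, hnot, hB1, hnab0⟩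
    · exact hcon (W.w4 l k hl hk hblt)
    -- fallback case
    have hocc : W.occ (c + 1) := by
      rcases hnot with ⟨hA1, hk1, _⟩ | ⟨hB2, _⟩
      · have h1 := W.w1 k (k+1) (by omega) hk1
        exact W.occ_le (Or.inl ⟨k+1, hk1, rfl⟩) (by omega)
      · have hl1 : l + 1 < n := Dcell_B_lt_n A B m n hB2
        have h1 := W.w2 l (l+1) (by omega) hl1
        exact W.occ_le (Or.inr ⟨l+1, hl1, rfl⟩) (by omega)
    rcases W.w5A k hk hocc with ⟨j', hj', hcol, hlt⟩ | ⟨l', hl', hcol, hlt⟩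
    · -- y = A j', A k < A j'
      have hkj : k < j' := A_reflect hA hk hj' hlt
      have hj1 : j' = k + 1 := by
        have := W.gA_add (j' - k) (by omega : k + (j' - k) < m)
        have he : k + (j' - k) = j' := by omega
        rw [he] at this
        omega
      subst hj1
      -- gA (k+1) = c+1, k+1<m
      rcases hnot with ⟨hA1, hk1, hnb1⟩ | ⟨hB2, hnab⟩
      · -- case (a)
        rcases Nat.lt_or_ge c (W.gB l) with hgl | hgl
        · -- gB l ≥ c+1 : IH ID (k+1, l)
          have := (ih ((m - (k+1)) + (n - l)) (by omega) (k+1) l rfl hj' hl).2 hB1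
          omega
        · -- gB l = c
          have hgleq : W.gB l = c := by omega
          have hocc2 : W.occ (W.gB l + 1) := by
            rw [hgleq]
            exact W.occ_le (Or.inl ⟨k+1, hj', hcol⟩) (by omega)
          rcases W.w5B l hl hocc2 with ⟨j'', hj'', hcol2, hblt2⟩ | ⟨l'', hl'', hcol2, hblt2⟩
          · -- B l < A j''
            rcases Nat.lt_or_ge j'' k with h2 | h2
            · exact absurd (lt_trans hblt2 (hA j'' k h2 hk)) hnbl
            · rcases Nat.eq_or_lt_of_le h2 with h3 | h3
              · rw [← h3] at hblt2; exact hnbl hblt2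
              · rcases Nat.eq_or_lt_of_le (show k + 1 ≤ j'' by omega) with h4 | h4
                · rw [← h4] at hblt2; exact hnb1 hblt2
                · have := W.gA_add (j'' - k) (by omega : k + (j'' - k) < m)
                  have he : k + (j'' - k) = j'' := by omega
                  rw [he] at this
                  omega
          · -- B l < B l''
            have hll : l < l'' := B_reflect hB hl hl'' hblt2
            have hl1 : l'' = l + 1 := by
              have := W.gB_add (l'' - l) (by omega : l + (l'' - l) < n)
              have he : l + (l'' - l) = l'' := by omega
              rw [he] at this
              omega
            subst hl1
            have := (ih ((m - (k+1)) + (n - (l+1))) (by omega) (k+1) (l+1) rfl hk1 hl'').1 hA1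
            omega
      · -- case (b) : Dcell (k+1)(l+1) = .B
        have hl1 : l + 1 < n := Dcell_B_lt_n A B m n hB2
        rcases Nat.lt_or_ge c (W.gB l) with hgl | hgl
        · have := (ih ((m - (k+1)) + (n - l)) (by omega) (k+1) l rfl hj' hl).2 hB1
          omega
        · have := (ih ((m - (k+1)) + (n - (l+1))) (by omega) (k+1) (l+1) rfl hj' hl1).2 hB2
          have h2 := W.w2 l (l+1) (by omega) hl1
          omega
    · -- y = B l', A k < B l'
      have hll : l < l' := by
        rcases Nat.lt_or_ge l' l with h1 | h1
        · exact absurd (lt_trans hlt (hB l' l h1 hl)) hnab0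
        · rcases Nat.eq_or_lt_of_le h1 with h2 | h2
          · rw [h2] at hnab0; exact absurd hlt hnab0
          · exact h2
      have hl1 : l' = l + 1 ∧ W.gB l = c := by
        have := W.gB_add (l' - l) (by omega : l + (l' - l) < n)
        have he : l + (l' - l) = l' := by omega
        rw [he] at this
        omega
      obtain ⟨rfl, hgleq⟩ := hl1
      rcases hnot with ⟨hA1, hk1, hnb1⟩ | ⟨hB2, hnab⟩
      · -- case (a) : IH IC (k+1, l+1)
        have := (ih ((m - (k+1)) + (n - (l+1))) (by omega) (k+1) (l+1) rfl hk1 hl').1 hA1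
        have h2 := W.w1 k (k+1) (by omega) hk1
        omega
      · exact hnab hlt

end MinCore
section Tableau

variable {P : Type*} [PartialOrder P] (A B : ℕ → P) (m n : ℕ)

lemma VB : ∀ d k l, m - k = d → Dcell A B m n k l = .B → k < m → l < n → ¬ B l < A k →
    l + 1 < n ∧ Dcell A B m n k (l+1) ≠ .A := by
  intro d
  induction d using Nat.strong_induction_on with
  | _ d ih =>
  intro k l hd hD hk hl hnbl
  rcases Dcell_B_facts A B m n hD hk with hblt | ⟨_, hnot, hB1, _⟩
  · exact absurd hblt hnbl
  rcases hnot with ⟨hA1, hk1, hnb1⟩ | ⟨hB2, hnab⟩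
  · exact absurd hA1 (ih (m - (k+1)) (by omega) (k+1) l rfl hB1 hk1 hl hnb1).2
  · have hl1 : l + 1 < n := Dcell_B_lt_n A B m n hB2
    refine ⟨hl1, fun hAl1 => ?_⟩
    obtain ⟨_, _, _, hguard⟩ := Dcell_A_facts A B m n hAl1 hl1
    exact hguard ⟨hB2, hnab⟩

/-- the diagonal tableau invariant -/
def Itab (k l : ℕ) : Prop :=
  ∀ j, l ≤ j → j < n → (k + (j - l) < m ∧ ¬ B j < A (k + (j - l)))

lemma Itab_AB {k l : ℕ} (h : Itab A B m n k l) : Itab A B m n (k+1) (l+1) := by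
  intro j h1 h2
  have h3 := h j (by omega) h2
  have he : k + 1 + (j - (l+1)) = k + (j - l) := by omega
  rw [he]
  exact h3

lemma Slem : ∀ μ k l, (m - k) + (n - l) = μ → Itab A B m n k l → l < n →
    Dcell A B m n k l ≠ .B := by
  intro μ
  induction μ using Nat.strong_induction_on with
  | _ μ ih =>
  intro k l hμ hI hl hD
  have h0 := hI l le_rfl hl
  have hk : k < m := by simpa using h0.1
  rcases Dcell_B_facts A B m n hD hk with hblt | ⟨hnbl, hnot, hB1, _⟩
  · have : ¬ B l < A (k + (l - l)) := h0.2
    simp only [Nat.sub_self, Nat.add_zero] at this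
    exact this hblt
  rcases hnot with ⟨hA1, hk1, hnb1⟩ | ⟨hB2, hnab⟩
  · exact absurd hA1 (VB A B m n (m - (k+1)) (k+1) l rfl hB1 hk1 hl hnb1).2
  · have hl1 : l + 1 < n := Dcell_B_lt_n A B m n hB2
    exact ih ((m - (k+1)) + (n - (l+1))) (by omega) (k+1) (l+1) rfl (Itab_AB A B m n hI) hl1 hB2

lemma Mlem : ∀ μ k l, (m - k) + (n - l) = μ → Itab A B m n k l → l < n →
    Dcell A B m n k l = .A → Itab A B m n (k+1) l := by
  intro μ
  induction μ using Nat.strong_induction_on with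
  | _ μ ih =>
  intro k l hμ hI hl hD
  have hk : k < m := (Dcell_A_facts A B m n hD hl).1
  obtain ⟨_, hnbl, hnot, hguard⟩ := Dcell_A_facts A B m n hD hl
  have hcasea : Dcell A B m n (k+1) (l+1) = .A ∧ k+1 < m ∧ ¬ B l < A (k+1) := by
    rcases hnot with h | ⟨hB2, hnab⟩
    · exact h
    · have hl1 : l + 1 < n := Dcell_B_lt_n A B m n hB2
      exact absurd hB2
        (Slem A B m n ((m - (k+1)) + (n - (l+1))) (k+1) (l+1) rfl (Itab_AB A B m n hI) hl1)
  obtain ⟨hA1, hk1, hnb1⟩ := hcasea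
  intro j hj1 hj2
  rcases Nat.eq_or_lt_of_le hj1 with he | hlt
  · have he2 : k + 1 + (j - l) = k + 1 := by omega
    rw [he2, ← he]
    exact ⟨hk1, hnb1⟩
  · have hl1 : l + 1 < n := by omega
    have hI2 := ih ((m - (k+1)) + (n - (l+1))) (by omega) (k+1) (l+1) rfl
      (Itab_AB A B m n hI) hl1 hA1
    have h2 := hI2 j (by omega) hj2
    have he2 : k + 1 + (j - l) = k + 2 + (j - (l+1)) := by omega
    rw [he2]
    exact h2

lemma walk_Itab (h0 : Itab A B m n 0 0) : ∀ c, Itab A B m n (st A B m n c).1 (st A B m n c).2 := by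
  intro c
  induction c with
  | zero => exact h0
  | succ c ihc =>
    rw [st_succ]
    rcases stepw_cases A B m n (st A B m n c) with ⟨_,_,he⟩|⟨hne, hc⟩
    · rw [he]; exact ihc
    · rcases hc with ⟨hD,he⟩|⟨hD,he⟩|⟨hD,he⟩ <;> rw [he]
      · by_cases hl : (st A B m n c).2 < n
        · exact Mlem A B m n _ _ _ rfl ihc hl hD
        · intro j h1 h2; omega
      · by_cases hl : (st A B m n c).2 < n
        · exact absurd hD (Slem A B m n _ _ _ rfl ihc hl)
        · rw [Dcell_of_le A B m n _ _ (by omega)] at hD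
          cases hD
      · exact Itab_AB A B m n ihc

/-- if the two rows form a tableau pair, every entry of the bottom row shares its column
with an entry of the top row -/
lemma tableau_covering (h0 : Itab A B m n 0 0) :
    ∀ l, l < n → ∃ j, j < m ∧ colA A B m n j = colB A B m n l := by
  intro l hl
  set c := colB A B m n l with hcB
  have hspec := colB_spec A B m n hl
  rw [← hcB] at hspec
  have hD : Dcell A B m n (st A B m n c).1 (st A B m n c).2 = .AB := by
    rcases stepw_cases A B m n (st A B m n c) with ⟨_,_,he⟩|⟨hne, hc⟩
    · exfalso
      have : st A B m n (c+1) = st A B m n c := by rw [st_succ, he]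
      rw [this] at hspec
      omega
    · rcases hc with ⟨hD,he⟩|⟨hD,he⟩|⟨hD,he⟩
      · exfalso
        have : st A B m n (c+1) = ((st A B m n c).1 + 1, (st A B m n c).2) := by rw [st_succ, he]
        rw [this] at hspec
        simp at hspec
        omega
      · exfalso
        refine Slem A B m n _ _ _ rfl (walk_Itab A B m n h0 c) ?_ hD
        rw [hspec.1]; exact hl
      · exact hD
  -- AB cell : the first coordinate also advances
  have hadv : (st A B m n (c+1)).1 = (st A B m n c).1 + 1 := by
    rcases stepw_cases A B m n (st A B m n c) with ⟨_,_,he⟩|⟨hne, hc⟩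
    · exfalso
      have : st A B m n (c+1) = st A B m n c := by rw [st_succ, he]
      rw [this] at hspec
      omega
    · rcases hc with ⟨hD2,he⟩|⟨hD2,he⟩|⟨hD2,he⟩
      · rw [hD2] at hD; cases hD
      · rw [hD2] at hD; cases hD
      · have : st A B m n (c+1) = ((st A B m n c).1 + 1, (st A B m n c).2 + 1) := by
          rw [st_succ, he]
        rw [this]
    -- done
  refine ⟨(st A B m n c).1, (Dcell_AB_lt A B m n hD).2.1, ?_⟩
  exact colA_eq A B m n hadv

variable (hA : ∀ j j', j < j' → j' < m → A j < A j')

include hA in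
/-- if every entry of the bottom row shares its column with a top-row entry, the two rows
form a tableau pair -/
lemma covering_tableau (hcov : ∀ l, l < n → ∃ j, j < m ∧ colA A B m n j = colB A B m n l) :
    n ≤ m ∧ ∀ l, l < n → ¬ B l < A l := by
  -- first : no B-steps
  have hnoB : ∀ c, (st A B m n (c+1)).2 = (st A B m n c).2 + 1 →
      (st A B m n (c+1)).1 = (st A B m n c).1 + 1 := by
    intro c hstep
    have hl : (st A B m n c).2 < n := by
      have := (st_bounds A B m n (c+1)).2; omega
    have hcB : colB A B m n (st A B m n c).2 = c := colB_eq A B m n hstep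
    obtain ⟨j, hj, hcol⟩ := hcov (st A B m n c).2 hl
    rw [hcB] at hcol
    have hspec := colA_spec A B m n hj
    rw [hcol] at hspec
    rw [hspec.2, hspec.1]
  -- invariant : snd ≤ fst
  have hinv : ∀ c, (st A B m n c).2 ≤ (st A B m n c).1 := by
    intro c
    induction c with
    | zero => exact Nat.le_refl _
    | succ c ihc =>
      have hm := st_fst_mono_succ A B m n c
      rcases Nat.lt_or_ge (st A B m n c).2 (st A B m n (c+1)).2 with h1 | h1
      · have h2 : (st A B m n (c+1)).2 = (st A B m n c).2 + 1 := by omega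
        have := hnoB c h2
        omega
      · omega
  have hnm : n ≤ m := by
    have := hinv (m + n)
    rw [st_final] at this
    exact this
  refine ⟨hnm, fun l hl hblt => ?_⟩
  -- b_l is placed in an AB cell whose top entry is A k with l ≤ k
  set c := colB A B m n l with hcB
  have hspec := colB_spec A B m n hl
  rw [← hcB] at hspec
  have hstep : (st A B m n (c+1)).2 = (st A B m n c).2 + 1 := by omega
  have hadv := hnoB c hstep
  have hk : (st A B m n c).1 < m := by
    have := (st_bounds A B m n (c+1)).1; omega
  have hD : Dcell A B m n (st A B m n c).1 (st A B m n c).2 = .AB := by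
    rcases stepw_cases A B m n (st A B m n c) with ⟨_,_,he⟩|⟨hne, hc⟩
    · have : st A B m n (c+1) = st A B m n c := by rw [st_succ, he]
      rw [this] at hstep; omega
    · rcases hc with ⟨hD2,he⟩|⟨hD2,he⟩|⟨hD2,he⟩
      · have : st A B m n (c+1) = ((st A B m n c).1 + 1, (st A B m n c).2) := by rw [st_succ, he]
        rw [this] at hstep; simp at hstep
      · have : st A B m n (c+1) = ((st A B m n c).1, (st A B m n c).2 + 1) := by rw [st_succ, he]
        rw [this] at hadv; simp at hadv
      · exact hD2
  have hnb := (Dcell_AB_lt A B m n hD).2.2.1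
  rw [hspec.1] at hnb
  -- l ≤ (st c).1
  have hle : l ≤ (st A B m n c).1 := by
    have := hinv c
    omega
  rcases Nat.eq_or_lt_of_le hle with he | hlt
  · rw [← he] at hnb
    exact hnb hblt
  · exact hnb (lt_trans hblt (hA l (st A B m n c).1 hlt hk))

end Tableau
section WalkMore

variable {P : Type*} [PartialOrder P] (A B : ℕ → P) (m n : ℕ)

lemma advance_cases {c : ℕ} (h : st A B m n (c+1) ≠ st A B m n c) :
    (Dcell A B m n (st A B m n c).1 (st A B m n c).2 = .A ∧
        st A B m n (c+1) = ((st A B m n c).1 + 1, (st A B m n c).2)) ∨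
    (Dcell A B m n (st A B m n c).1 (st A B m n c).2 = .B ∧
        st A B m n (c+1) = ((st A B m n c).1, (st A B m n c).2 + 1)) ∨
    (Dcell A B m n (st A B m n c).1 (st A B m n c).2 = .AB ∧
        st A B m n (c+1) = ((st A B m n c).1 + 1, (st A B m n c).2 + 1)) := by
  rcases stepw_cases A B m n (st A B m n c) with ⟨h1,h2,he⟩|⟨hne, hc⟩
  · exact absurd (by rw [st_succ, he]) h
  · rcases hc with ⟨hD,he⟩|⟨hD,he⟩|⟨hD,he⟩
    · exact Or.inl ⟨hD, by rw [st_succ, he]⟩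
    · exact Or.inr (Or.inl ⟨hD, by rw [st_succ, he]⟩)
    · exact Or.inr (Or.inr ⟨hD, by rw [st_succ, he]⟩)

lemma colA_advance {j : ℕ} (hj : j < m) :
    st A B m n (colA A B m n j + 1) ≠ st A B m n (colA A B m n j) := by
  have hs := colA_spec A B m n hj
  intro h
  rw [h] at hs
  omega

lemma colB_advance {l : ℕ} (hl : l < n) :
    st A B m n (colB A B m n l + 1) ≠ st A B m n (colB A B m n l) := by
  have hs := colB_spec A B m n hl
  intro h
  rw [h] at hs
  omega

lemma fst_advance_colA {c : ℕ} (h : (st A B m n (c+1)).1 = (st A B m n c).1 + 1) :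
    (st A B m n c).1 < m ∧ colA A B m n (st A B m n c).1 = c := by
  have hb := (st_bounds A B m n (c+1)).1
  exact ⟨by omega, colA_eq A B m n h⟩

lemma snd_advance_colB {c : ℕ} (h : (st A B m n (c+1)).2 = (st A B m n c).2 + 1) :
    (st A B m n c).2 < n ∧ colB A B m n (st A B m n c).2 = c := by
  have hb := (st_bounds A B m n (c+1)).2
  exact ⟨by omega, colB_eq A B m n h⟩

/-- occupancy of a column of the minimal alignment -/
def wocc (c : ℕ) : Prop :=
  (∃ j, j < m ∧ colA A B m n j = c) ∨ (∃ l, l < n ∧ colB A B m n l = c)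

lemma wocc_advance {c : ℕ} (h : wocc A B m n c) : st A B m n (c+1) ≠ st A B m n c := by
  rcases h with ⟨j, hj, hc⟩ | ⟨l, hl, hc⟩
  · rw [← hc]; exact colA_advance A B m n hj
  · rw [← hc]; exact colB_advance A B m n hl

/-- gap-freeness of the minimal alignment -/
lemma wocc_gapfree {c : ℕ} (hc : 0 < c) (h : wocc A B m n c) : wocc A B m n (c - 1) := by
  obtain ⟨d, rfl⟩ : ∃ d, c = d + 1 := ⟨c - 1, by omega⟩
  simp only [Nat.add_sub_cancel]
  have hadv := wocc_advance A B m n h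
  have hadv2 : st A B m n (d + 1) ≠ st A B m n d := by
    intro he
    refine hadv ?_
    have h1 : st A B m n (d + 2) = stepw A B m n (st A B m n d) := by
      rw [st_succ, he]
    rw [h1, ← st_succ]
  rcases advance_cases A B m n hadv2 with ⟨hD, he⟩ | ⟨hD, he⟩ | ⟨hD, he⟩
  · have h1 : (st A B m n (d+1)).1 = (st A B m n d).1 + 1 := by rw [he]
    obtain ⟨h2, h3⟩ := fst_advance_colA A B m n h1
    exact Or.inl ⟨_, h2, h3⟩
  · have h1 : (st A B m n (d+1)).2 = (st A B m n d).2 + 1 := by rw [he]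
    obtain ⟨h2, h3⟩ := snd_advance_colB A B m n h1
    exact Or.inr ⟨_, h2, h3⟩
  · have h1 : (st A B m n (d+1)).1 = (st A B m n d).1 + 1 := by rw [he]
    obtain ⟨h2, h3⟩ := fst_advance_colA A B m n h1
    exact Or.inl ⟨_, h2, h3⟩

variable (hA : ∀ j j', j < j' → j' < m → A j < A j') (hB : ∀ l l', l < l' → l' < n → B l < B l')

include hB in
/-- condition (3) for the minimal alignment -/
lemma valid4 : ∀ l j, l < n → j < m → B l < A j → colB A B m n l < colA A B m n j := by
  intro l j hl hj hblt
  by_contra hcon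
  have hle : colA A B m n j ≤ colB A B m n l := by omega
  have hsA := colA_spec A B m n hj
  have hsB := colB_spec A B m n hl
  set c := colA A B m n j with hcdef
  have hl2 : (st A B m n c).2 ≤ l := by
    have := st_snd_mono A B m n hle
    omega
  have hfst : (st A B m n (c+1)).1 = (st A B m n c).1 + 1 := by omega
  rcases advance_cases A B m n (colA_advance A B m n hj) with ⟨hD, he⟩ | ⟨hD, he⟩ | ⟨hD, he⟩
  · rw [hsA.1] at hD
    have hfacts := Dcell_A_facts A B m n hD (by omega : (st A B m n c).2 < n)
    rcases Nat.eq_or_lt_of_le hl2 with h1 | h1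
    · rw [h1] at hfacts; exact hfacts.2.1 hblt
    · exact hfacts.2.1 (lt_trans (hB _ l h1 hl) hblt)
  · exfalso
    have h1 : (st A B m n (c+1)).1 = (st A B m n c).1 := by rw [he]
    omega
  · rw [hsA.1] at hD
    have hfacts := Dcell_AB_lt A B m n hD
    rcases Nat.eq_or_lt_of_le hl2 with h1 | h1
    · rw [h1] at hfacts; exact hfacts.2.2.1 hblt
    · exact hfacts.2.2.1 (lt_trans (hB _ l h1 hl) hblt)

include hA in
lemma valid5A : ∀ j, j < m → wocc A B m n (colA A B m n j + 1) →
    (∃ j', j' < m ∧ colA A B m n j' = colA A B m n j + 1 ∧ A j < A j') ∨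
    (∃ l', l' < n ∧ colB A B m n l' = colA A B m n j + 1 ∧ A j < B l') := by
  intro j hj hocc
  set c := colA A B m n j with hcdef
  have hsA := colA_spec A B m n hj
  rw [← hcdef] at hsA
  rcases advance_cases A B m n (wocc_advance A B m n hocc) with ⟨hD', he'⟩ | ⟨hD', he'⟩ | ⟨hD', he'⟩
  · -- next cell is A : left disjunct
    have h1 : (st A B m n (c+1+1)).1 = (st A B m n (c+1)).1 + 1 := by rw [he']
    obtain ⟨h2, h3⟩ := fst_advance_colA A B m n h1
    rw [hsA.2] at h2 h3
    exact Or.inl ⟨j+1, h2, h3, hA j (j+1) (by omega) h2⟩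
  · -- next cell is B : right disjunct with order condition
    have h1 : (st A B m n (c+1+1)).2 = (st A B m n (c+1)).2 + 1 := by rw [he']
    obtain ⟨h2, h3⟩ := snd_advance_colB A B m n h1
    refine Or.inr ⟨(st A B m n (c+1)).2, h2, h3, ?_⟩
    -- analyze the decision at cell c
    rcases advance_cases A B m n (colA_advance A B m n hj) with ⟨hD, he⟩ | ⟨hD, he⟩ | ⟨hD, he⟩
    · -- Dcell at (j, l) = .A and st (c+1) = (j+1, l)
      rw [hsA.1] at hD
      have hl2 : (st A B m n (c+1)).2 = (st A B m n c).2 := by rw [he]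
      rw [hl2] at hD' h2 ⊢
      have hfacts := Dcell_A_facts A B m n hD h2
      rw [he] at hD'
      simp only [← hcdef, hsA.1] at hD'
      by_contra hab
      exact hfacts.2.2.2 ⟨hD', hab⟩
    · exfalso
      have h1 : (st A B m n (c+1)).1 = (st A B m n c).1 := by rw [he]
      omega
    · -- Dcell at (j, l) = .AB and st (c+1) = (j+1, l+1)
      rw [hsA.1] at hD
      have hl2 : (st A B m n (c+1)).2 = (st A B m n c).2 + 1 := by rw [he]
      have hfacts := Dcell_AB_lt A B m n hD
      rw [he] at hD'
      simp only [← hcdef, hsA.1] at hD'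
      rw [hl2]
      by_contra hab
      exact hfacts.2.2.2 (Or.inr ⟨hD', hab⟩)
  · -- next cell is AB : left disjunct
    have h1 : (st A B m n (c+1+1)).1 = (st A B m n (c+1)).1 + 1 := by rw [he']
    obtain ⟨h2, h3⟩ := fst_advance_colA A B m n h1
    rw [hsA.2] at h2 h3
    exact Or.inl ⟨j+1, h2, h3, hA j (j+1) (by omega) h2⟩

include hB in
lemma valid5B : ∀ l, l < n → wocc A B m n (colB A B m n l + 1) →
    (∃ j', j' < m ∧ colA A B m n j' = colB A B m n l + 1 ∧ B l < A j') ∨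
    (∃ l', l' < n ∧ colB A B m n l' = colB A B m n l + 1 ∧ B l < B l') := by
  intro l hl hocc
  set c := colB A B m n l with hcdef
  have hsB := colB_spec A B m n hl
  rw [← hcdef] at hsB
  rcases advance_cases A B m n (wocc_advance A B m n hocc) with ⟨hD', he'⟩ | ⟨hD', he'⟩ | ⟨hD', he'⟩
  · -- next cell is pure A
    have h1 : (st A B m n (c+1+1)).1 = (st A B m n (c+1)).1 + 1 := by rw [he']
    obtain ⟨h2, h3⟩ := fst_advance_colA A B m n h1
    refine Or.inl ⟨(st A B m n (c+1)).1, h2, h3, ?_⟩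
    rcases advance_cases A B m n (colB_advance A B m n hl) with ⟨hD, he⟩ | ⟨hD, he⟩ | ⟨hD, he⟩
    · exfalso
      have h1 : (st A B m n (c+1)).2 = (st A B m n c).2 := by rw [he]
      omega
    · -- Dcell at (k, l) = .B and st (c+1) = (k, l+1)
      rw [hsB.1] at hD
      have hk2 : (st A B m n (c+1)).1 = (st A B m n c).1 := by rw [he]
      rw [hk2] at hD' h2 ⊢
      rw [he] at hD'
      simp only [← hcdef, hsB.1] at hD'
      by_cases hblt : B l < A (st A B m n c).1
      · exact hblt
      · exact absurd hD' (VB A B m n _ _ _ rfl hD h2 hl hblt).2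
    · -- Dcell at (k, l) = .AB and st (c+1) = (k+1, l+1)
      rw [hsB.1] at hD
      have hk2 : (st A B m n (c+1)).1 = (st A B m n c).1 + 1 := by rw [he]
      have hfacts := Dcell_AB_lt A B m n hD
      rw [he] at hD'
      simp only [← hcdef, hsB.1] at hD'
      rw [hk2] at h2 ⊢
      by_contra hab
      exact hfacts.2.2.2 (Or.inl ⟨hD', h2, hab⟩)
  · -- next cell has a B part
    have h1 : (st A B m n (c+1+1)).2 = (st A B m n (c+1)).2 + 1 := by rw [he']
    obtain ⟨h2, h3⟩ := snd_advance_colB A B m n h1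
    rw [hsB.2] at h2 h3
    exact Or.inr ⟨l+1, h2, h3, hB l (l+1) (by omega) h2⟩
  · have h1 : (st A B m n (c+1+1)).2 = (st A B m n (c+1)).2 + 1 := by rw [he']
    obtain ⟨h2, h3⟩ := snd_advance_colB A B m n h1
    rw [hsB.2] at h2 h3
    exact Or.inr ⟨l+1, h2, h3, hB l (l+1) (by omega) h2⟩

include hA hB in
/-- minimality of the walk columns -/
lemma walk_min (W : AlData A B m n) :
    (∀ j, j < m → colA A B m n j ≤ W.gA j) ∧ (∀ l, l < n → colB A B m n l ≤ W.gB l) := by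
  have hPinv : ∀ c, ((st A B m n c).1 < m → c ≤ W.gA (st A B m n c).1) ∧
      ((st A B m n c).2 < n → c ≤ W.gB (st A B m n c).2) := by
    intro c
    induction c with
    | zero => exact ⟨fun _ => Nat.zero_le _, fun _ => Nat.zero_le _⟩
    | succ c ihc =>
      by_cases hend : st A B m n (c+1) = st A B m n c
      · rcases stepw_cases A B m n (st A B m n c) with ⟨h1,h2,he⟩|⟨hne, hc⟩
        · rw [hend]
          exact ⟨fun h => absurd h (by omega), fun h => absurd h (by omega)⟩
        · exfalso
          rcases hc with ⟨hD,he⟩|⟨hD,he⟩|⟨hD,he⟩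
          · have h1 : (st A B m n (c+1)).1 = (st A B m n c).1 + 1 := by rw [st_succ, he]
            rw [hend] at h1
            omega
          · have h1 : (st A B m n (c+1)).2 = (st A B m n c).2 + 1 := by rw [st_succ, he]
            rw [hend] at h1
            omega
          · have h1 : (st A B m n (c+1)).1 = (st A B m n c).1 + 1 := by rw [st_succ, he]
            rw [hend] at h1
            omega
      · rcases advance_cases A B m n hend with ⟨hD, he⟩ | ⟨hD, he⟩ | ⟨hD, he⟩
        · rw [he]
          constructor
          · intro h
            simp only at h ⊢
            have hki : (st A B m n c).1 < m := by omega
            have := ihc.1 hki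
            have := W.w1 (st A B m n c).1 ((st A B m n c).1 + 1) (by omega) h
            omega
          · intro h
            simp only at h ⊢
            have hki : (st A B m n c).1 < m := Dcell_A_lt_m A B m n hD h
            have hic := (ICID hA hB W _ _ _ rfl hki h).1 hD
            have := ihc.1 hki
            omega
        · rw [he]
          have hl : (st A B m n c).2 < n := Dcell_B_lt_n A B m n hD
          constructor
          · intro h
            simp only at h ⊢
            have hid := (ICID hA hB W _ _ _ rfl h hl).2 hD
            have := ihc.2 hl
            omega
          · intro h
            simp only at h ⊢
            have := ihc.2 hl
            have := W.w2 (st A B m n c).2 ((st A B m n c).2 + 1) (by omega) h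
            omega
        · rw [he]
          obtain ⟨hl, hk, _, _⟩ := Dcell_AB_lt A B m n hD
          constructor
          · intro h
            simp only at h ⊢
            have := ihc.1 hk
            have := W.w1 (st A B m n c).1 ((st A B m n c).1 + 1) (by omega) h
            omega
          · intro h
            simp only at h ⊢
            have := ihc.2 hl
            have := W.w2 (st A B m n c).2 ((st A B m n c).2 + 1) (by omega) h
            omega
  constructor
  · intro j hj
    have hs := colA_spec A B m n hj
    have := (hPinv (colA A B m n j)).1
    rw [hs.1] at this
    exact this hj
  · intro l hl
    have hs := colB_spec A B m n hl
    have := (hPinv (colB A B m n l)).2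
    rw [hs.1] at this
    exact this hl

end WalkMore
section Rows

variable {P : Type*} [PartialOrder P] [Fintype P] [Inhabited P] (T : PArray P)

lemma row_none_exists (r : ℕ) : ∃ j, T.entry r j = none := by
  by_contra hc
  push_neg at hc
  have hsome : ∀ j, ∃ x, T.entry r j = some x := by
    intro j
    cases h : T.entry r j with
    | none => exact absurd h (hc j)
    | some a => exact ⟨a, rfl⟩
  set f : ℕ → P := fun j => (T.entry r j).iget with hf
  have hinj : Function.Injective f := by
    intro j j' he
    obtain ⟨x, hx⟩ := hsome j
    obtain ⟨x', hx'⟩ := hsome j'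
    have h1 : f j = x := by rw [hf]; simp [hx]
    have h2 : f j' = x' := by rw [hf]; simp [hx']
    have hxx : x = x' := by rw [← h1, ← h2, he]
    rw [hxx] at hx
    have := (T.exists_unique x').unique (y₁ := (r, j)) (y₂ := (r, j')) hx hx'
    simpa using this
  obtain ⟨a, b, hab, he⟩ := Finite.exists_ne_map_eq_of_infinite f
  exact hab (hinj he)

open Classical in
/-- length of row `r` -/
noncomputable def rowLen (r : ℕ) : ℕ := Nat.find (row_none_exists T r)

open Classical in
lemma rowLen_lt_none {r j : ℕ} (hj : j < rowLen T r) : ¬ T.entry r j = none :=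
  Nat.find_min (row_none_exists T r) hj

open Classical in
lemma rowLen_none (r : ℕ) : T.entry r (rowLen T r) = none :=
  Nat.find_spec (row_none_exists T r)

/-- the `j`-th entry of row `r` -/
noncomputable def rowElt (r j : ℕ) : P := (T.entry r j).iget

lemma rowElt_spec {r j : ℕ} (hj : j < rowLen T r) : T.entry r j = some (rowElt T r j) := by
  have h := rowLen_lt_none T hj
  cases he : T.entry r j with
  | none => exact absurd he h
  | some a => simp [rowElt, he]

lemma rowLen_spec (r : ℕ) : ∀ j, rowLen T r ≤ j → T.entry r j = none := by
  intro j hj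
  obtain ⟨d, rfl⟩ : ∃ d, j = rowLen T r + d := ⟨j - rowLen T r, by omega⟩
  clear hj
  induction d with
  | zero => exact rowLen_none T r
  | succ d ihd =>
    cases he : T.entry r (rowLen T r + (d + 1)) with
    | none => rfl
    | some x =>
      have he2 : rowLen T r + (d + 1) = (rowLen T r + d) + 1 := by omega
      rw [he2] at he
      obtain ⟨y, hy, _⟩ := T.row_chain r (rowLen T r + d) x he
      rw [ihd] at hy
      cases hy

lemma entry_lt_rowLen {r j : ℕ} {x : P} (h : T.entry r j = some x) : j < rowLen T r := by
  by_contra hc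
  rw [rowLen_spec T r j (by omega)] at h
  cases h

lemma rowElt_eq {r j : ℕ} {x : P} (h : T.entry r j = some x) : rowElt T r j = x := by
  simp [rowElt, h]

lemma rowElt_mono (r : ℕ) : ∀ j j', j < j' → j' < rowLen T r →
    rowElt T r j < rowElt T r j' := by
  intro j j'
  induction j' with
  | zero => omega
  | succ j' ih =>
    intro hjj hj'
    have hstep : rowElt T r j' < rowElt T r (j' + 1) := by
      obtain ⟨y, hy, hlt⟩ := T.row_chain r j' (rowElt T r (j'+1)) (rowElt_spec T hj')
      rwa [← rowElt_eq T hy] at hlt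
    rcases Nat.eq_or_lt_of_le (Nat.lt_succ_iff.mp hjj) with he | hlt
    · rw [he]; exact hstep
    · exact lt_trans (ih hlt (by omega : j' < rowLen T r)) hstep

lemma inRow_iff {r : ℕ} {x : P} : InRow T r x ↔ ∃ j, j < rowLen T r ∧ rowElt T r j = x := by
  constructor
  · rintro ⟨j, hj⟩
    exact ⟨j, entry_lt_rowLen T hj, rowElt_eq T hj⟩
  · rintro ⟨j, hj, rfl⟩
    exact ⟨j, rowElt_spec T hj⟩

lemma rowElt_inj {r j j' : ℕ} (hj : j < rowLen T r) (hj' : j' < rowLen T r)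
    (h : rowElt T r j = rowElt T r j') : j = j' := by
  have h1 := rowElt_spec T hj
  have h2 := rowElt_spec T hj'
  rw [h] at h1
  have := (T.exists_unique (rowElt T r j')).unique (y₁ := (r, j)) (y₂ := (r, j')) h1 h2
  simpa using this

lemma rowElt_ne {r j l : ℕ} (hj : j < rowLen T r) (hl : l < rowLen T (r+1)) :
    rowElt T r j ≠ rowElt T (r+1) l := by
  intro h
  have h1 := rowElt_spec T hj
  have h2 := rowElt_spec T (r := r+1) hl
  rw [h] at h1
  have := (T.exists_unique (rowElt T (r+1) l)).unique (y₁ := (r, j)) (y₂ := (r+1, l)) h1 h2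
  have hr : r = r + 1 := congrArg Prod.fst this
  omega

end Rows
section GStar

variable {P : Type*} [PartialOrder P] [Fintype P] [Inhabited P] (T : PArray P) (r : ℕ)

lemma rowElt_reflect {j j' : ℕ} (hj : j < rowLen T r) (hj' : j' < rowLen T r)
    (h : rowElt T r j < rowElt T r j') : j < j' := by
  by_contra hc
  rcases Nat.lt_or_ge j' j with h1 | h1
  · exact absurd (rowElt_mono T r j' j h1 hj) (lt_asymm h)
  · have : j = j' := by omega
    rw [this] at h
    exact lt_irrefl _ h

noncomputable def colAT (j : ℕ) : ℕ :=
  colA (rowElt T r) (rowElt T (r+1)) (rowLen T r) (rowLen T (r+1)) j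

noncomputable def colBT (l : ℕ) : ℕ :=
  colB (rowElt T r) (rowElt T (r+1)) (rowLen T r) (rowLen T (r+1)) l

open Classical in
/-- the minimal weak `r` alignment of `T`, as a column function -/
noncomputable def gstar : P → ℕ := fun x =>
  if h : ∃ j, j < rowLen T r ∧ rowElt T r j = x then colAT T r h.choose
  else if h2 : ∃ l, l < rowLen T (r+1) ∧ rowElt T (r+1) l = x then colBT T r h2.choose
  else 0

lemma gstar_A {j : ℕ} (hj : j < rowLen T r) :
    gstar T r (rowElt T r j) = colAT T r j := by
  have h : ∃ j', j' < rowLen T r ∧ rowElt T r j' = rowElt T r j := ⟨j, hj, rfl⟩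
  rw [gstar, dif_pos h]
  obtain ⟨h1, h2⟩ := h.choose_spec
  rw [rowElt_inj T h1 hj h2]

lemma gstar_B {l : ℕ} (hl : l < rowLen T (r+1)) :
    gstar T r (rowElt T (r+1) l) = colBT T r l := by
  have h : ¬ ∃ j', j' < rowLen T r ∧ rowElt T r j' = rowElt T (r+1) l := by
    rintro ⟨j', hj', he⟩
    exact rowElt_ne T hj' hl he
  have h2 : ∃ l', l' < rowLen T (r+1) ∧ rowElt T (r+1) l' = rowElt T (r+1) l := ⟨l, hl, rfl⟩
  rw [gstar, dif_neg h, dif_pos h2]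
  obtain ⟨h3, h4⟩ := h2.choose_spec
  rw [rowElt_inj T h3 hl h4]

/-- `gstar` is a weak `r` alignment -/
lemma gstar_weak : WeakAlignRow T r (gstar T r) := by
  have hA : ∀ j j', j < j' → j' < rowLen T r → rowElt T r j < rowElt T r j' :=
    fun j j' h1 h2 => rowElt_mono T r j j' h1 h2
  have hB : ∀ l l', l < l' → l' < rowLen T (r+1) → rowElt T (r+1) l < rowElt T (r+1) l' :=
    fun l l' h1 h2 => rowElt_mono T (r+1) l l' h1 h2
  refine ⟨?_, ?_, ?_, ?_, ?_⟩
  · -- (1) row r monotone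
    intro x y hx hy hlt
    obtain ⟨j, hj, rfl⟩ := (inRow_iff T).1 hx
    obtain ⟨j', hj', rfl⟩ := (inRow_iff T).1 hy
    rw [gstar_A T r hj, gstar_A T r hj']
    exact colA_lt_colA _ _ _ _ (rowElt_reflect T r hj hj' hlt) hj'
  · -- (2) row r+1 monotone
    intro x y hx hy hlt
    obtain ⟨l, hl, rfl⟩ := (inRow_iff T).1 hx
    obtain ⟨l', hl', rfl⟩ := (inRow_iff T).1 hy
    rw [gstar_B T r hl, gstar_B T r hl']
    exact colB_lt_colB _ _ _ _ (rowElt_reflect T (r+1) hl hl' hlt) hl'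
  · -- (3) gap-free
    intro c hc ⟨x, hx, hgx⟩
    have hocc : wocc (rowElt T r) (rowElt T (r+1)) (rowLen T r) (rowLen T (r+1)) c := by
      rcases hx with hx | hx
      · obtain ⟨j, hj, rfl⟩ := (inRow_iff T).1 hx
        rw [gstar_A T r hj] at hgx
        exact Or.inl ⟨j, hj, hgx⟩
      · obtain ⟨l, hl, rfl⟩ := (inRow_iff T).1 hx
        rw [gstar_B T r hl] at hgx
        exact Or.inr ⟨l, hl, hgx⟩
    rcases wocc_gapfree _ _ _ _ hc hocc with ⟨j, hj, hcol⟩ | ⟨l, hl, hcol⟩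
    · exact ⟨rowElt T r j, Or.inl ((inRow_iff T).2 ⟨j, hj, rfl⟩), by rw [gstar_A T r hj]; exact hcol⟩
    · exact ⟨rowElt T (r+1) l, Or.inr ((inRow_iff T).2 ⟨l, hl, rfl⟩),
        by rw [gstar_B T r hl]; exact hcol⟩
  · -- (4)
    intro x y hx hy hlt
    obtain ⟨l, hl, rfl⟩ := (inRow_iff T).1 hx
    obtain ⟨j, hj, rfl⟩ := (inRow_iff T).1 hy
    rw [gstar_B T r hl, gstar_A T r hj]
    exact valid4 _ _ _ _ hB l j hl hj hlt
  · -- (5)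
    intro x hx ⟨z, hz, hgz⟩
    have htr : ∀ c, (∃ zz, (InRow T r zz ∨ InRow T (r+1) zz) ∧ gstar T r zz = c) →
        wocc (rowElt T r) (rowElt T (r+1)) (rowLen T r) (rowLen T (r+1)) c := by
      rintro c ⟨zz, hzz, hgzz⟩
      rcases hzz with hzz | hzz
      · obtain ⟨j, hj, rfl⟩ := (inRow_iff T).1 hzz
        rw [gstar_A T r hj] at hgzz
        exact Or.inl ⟨j, hj, hgzz⟩
      · obtain ⟨l, hl, rfl⟩ := (inRow_iff T).1 hzz
        rw [gstar_B T r hl] at hgzz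
        exact Or.inr ⟨l, hl, hgzz⟩
    rcases hx with hx | hx
    · obtain ⟨j, hj, rfl⟩ := (inRow_iff T).1 hx
      have hocc := htr _ ⟨z, hz, hgz⟩
      rw [gstar_A T r hj] at hocc ⊢
      rcases valid5A _ _ _ _ hA j hj hocc with ⟨j', hj', hc, hlt⟩ | ⟨l', hl', hc, hlt⟩
      · exact ⟨rowElt T r j', Or.inl ((inRow_iff T).2 ⟨j', hj', rfl⟩),
          by rw [gstar_A T r hj']; exact hc, hlt⟩
      · exact ⟨rowElt T (r+1) l', Or.inr ((inRow_iff T).2 ⟨l', hl', rfl⟩),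
          by rw [gstar_B T r hl']; exact hc, hlt⟩
    · obtain ⟨l, hl, rfl⟩ := (inRow_iff T).1 hx
      have hocc := htr _ ⟨z, hz, hgz⟩
      rw [gstar_B T r hl] at hocc ⊢
      rcases valid5B _ _ _ _ hB l hl hocc with ⟨j', hj', hc, hlt⟩ | ⟨l', hl', hc, hlt⟩
      · exact ⟨rowElt T r j', Or.inl ((inRow_iff T).2 ⟨j', hj', rfl⟩),
          by rw [gstar_A T r hj']; exact hc, hlt⟩
      · exact ⟨rowElt T (r+1) l', Or.inr ((inRow_iff T).2 ⟨l', hl', rfl⟩),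
          by rw [gstar_B T r hl']; exact hc, hlt⟩

/-- any weak `r` alignment gives rise to alignment data -/
noncomputable def toAlData {γ' : P → ℕ} (h : WeakAlignRow T r γ') :
    AlData (rowElt T r) (rowElt T (r+1)) (rowLen T r) (rowLen T (r+1)) where
  gA := fun j => γ' (rowElt T r j)
  gB := fun l => γ' (rowElt T (r+1) l)
  w1 := fun j j' hjj hj' =>
    h.1 _ _ ((inRow_iff T).2 ⟨j, by omega, rfl⟩) ((inRow_iff T).2 ⟨j', hj', rfl⟩)
      (rowElt_mono T r j j' hjj hj')
  w2 := fun l l' hll hl' =>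
    h.2.1 _ _ ((inRow_iff T).2 ⟨l, by omega, rfl⟩) ((inRow_iff T).2 ⟨l', hl', rfl⟩)
      (rowElt_mono T (r+1) l l' hll hl')
  w4 := fun l j hl hj hlt =>
    h.2.2.2.1 _ _ ((inRow_iff T).2 ⟨l, hl, rfl⟩) ((inRow_iff T).2 ⟨j, hj, rfl⟩) hlt
  w3 := by
    intro c hc hocc
    have h1 : ∃ x, (InRow T r x ∨ InRow T (r+1) x) ∧ γ' x = c := by
      rcases hocc with ⟨j, hj, hcol⟩ | ⟨l, hl, hcol⟩
      · exact ⟨rowElt T r j, Or.inl ((inRow_iff T).2 ⟨j, hj, rfl⟩), hcol⟩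
      · exact ⟨rowElt T (r+1) l, Or.inr ((inRow_iff T).2 ⟨l, hl, rfl⟩), hcol⟩
    obtain ⟨x, hx, hgx⟩ := h.2.2.1 c hc h1
    rcases hx with hx | hx
    · obtain ⟨j, hj, rfl⟩ := (inRow_iff T).1 hx
      exact Or.inl ⟨j, hj, hgx⟩
    · obtain ⟨l, hl, rfl⟩ := (inRow_iff T).1 hx
      exact Or.inr ⟨l, hl, hgx⟩
  w5A := by
    intro j hj hocc
    have h1 : ∃ z, (InRow T r z ∨ InRow T (r+1) z) ∧ γ' z = γ' (rowElt T r j) + 1 := by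
      rcases hocc with ⟨j', hj', hcol⟩ | ⟨l', hl', hcol⟩
      · exact ⟨rowElt T r j', Or.inl ((inRow_iff T).2 ⟨j', hj', rfl⟩), hcol⟩
      · exact ⟨rowElt T (r+1) l', Or.inr ((inRow_iff T).2 ⟨l', hl', rfl⟩), hcol⟩
    obtain ⟨y, hy, hgy, hlty⟩ := h.2.2.2.2 _ (Or.inl ((inRow_iff T).2 ⟨j, hj, rfl⟩)) h1
    rcases hy with hy | hy
    · obtain ⟨j', hj', rfl⟩ := (inRow_iff T).1 hy
      exact Or.inl ⟨j', hj', hgy, hlty⟩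
    · obtain ⟨l', hl', rfl⟩ := (inRow_iff T).1 hy
      exact Or.inr ⟨l', hl', hgy, hlty⟩
  w5B := by
    intro l hl hocc
    have h1 : ∃ z, (InRow T r z ∨ InRow T (r+1) z) ∧ γ' z = γ' (rowElt T (r+1) l) + 1 := by
      rcases hocc with ⟨j', hj', hcol⟩ | ⟨l', hl', hcol⟩
      · exact ⟨rowElt T r j', Or.inl ((inRow_iff T).2 ⟨j', hj', rfl⟩), hcol⟩
      · exact ⟨rowElt T (r+1) l', Or.inr ((inRow_iff T).2 ⟨l', hl', rfl⟩), hcol⟩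
    obtain ⟨y, hy, hgy, hlty⟩ := h.2.2.2.2 _ (Or.inr ((inRow_iff T).2 ⟨l, hl, rfl⟩)) h1
    rcases hy with hy | hy
    · obtain ⟨j', hj', rfl⟩ := (inRow_iff T).1 hy
      exact Or.inl ⟨j', hj', hgy, hlty⟩
    · obtain ⟨l', hl', rfl⟩ := (inRow_iff T).1 hy
      exact Or.inr ⟨l', hl', hgy, hlty⟩

/-- `gstar` is the pointwise minimal weak alignment -/
lemma gstar_min {γ' : P → ℕ} (h : WeakAlignRow T r γ') :
    ∀ x, (InRow T r x ∨ InRow T (r+1) x) → gstar T r x ≤ γ' x := by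
  have hA : ∀ j j', j < j' → j' < rowLen T r → rowElt T r j < rowElt T r j' :=
    fun j j' h1 h2 => rowElt_mono T r j j' h1 h2
  have hB : ∀ l l', l < l' → l' < rowLen T (r+1) → rowElt T (r+1) l < rowElt T (r+1) l' :=
    fun l l' h1 h2 => rowElt_mono T (r+1) l l' h1 h2
  have hmin := walk_min _ _ _ _ hA hB (toAlData T r h)
  intro x hx
  rcases hx with hx | hx
  · obtain ⟨j, hj, rfl⟩ := (inRow_iff T).1 hx
    rw [gstar_A T r hj]
    exact hmin.1 j hj
  · obtain ⟨l, hl, rfl⟩ := (inRow_iff T).1 hx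
    rw [gstar_B T r hl]
    exact hmin.2 l hl

end GStar

end Stmt14Aux


open Stmt14Aux

/-- A `P`-array is a highest weight element of the `P`-array crystal (for every `r`,
in the `r` alignment — the minimal weak `r` alignment — every column containing an
entry of row `r+1` also contains an entry of row `r`, i.e. `e_r(T) = 0`) if and only
if it is a `P`-tableau. -/
theorem stmt_14 {P : Type*} [PartialOrder P] [Fintype P] (h31 : ThreePlusOneFree P)
    (T : PArray P) :
    (∀ (r : ℕ) (γ : P → ℕ), WeakAlignRow T r γ →
      (∀ γ', WeakAlignRow T r γ' → ∀ x, (InRow T r x ∨ InRow T (r + 1) x) → γ x ≤ γ' x) →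
      ∀ x, InRow T (r + 1) x → ∃ y, InRow T r y ∧ γ y = γ x) ↔
    (∀ i j x, T.entry (i + 1) j = some x → ∃ y, T.entry i j = some y ∧ ¬ x < y) := by
  classical
  by_cases hP : Nonempty P
  swap
  · constructor
    · intro _ i j x hx
      exact absurd ⟨x⟩ hP
    · intro _ r γ _ _ x hx
      exact absurd ⟨x⟩ hP
  haveI : Inhabited P := Classical.inhabited_of_nonempty hP
  constructor
  · -- highest weight → tableau
    intro hlhs i j x hx
    have hj : j < rowLen T (i+1) := entry_lt_rowLen T hx
    have hxB : rowElt T (i+1) j = x := rowElt_eq T hx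
    have hcov : ∀ l, l < rowLen T (i+1) → ∃ j', j' < rowLen T i ∧
        colA (rowElt T i) (rowElt T (i+1)) (rowLen T i) (rowLen T (i+1)) j' =
        colB (rowElt T i) (rowElt T (i+1)) (rowLen T i) (rowLen T (i+1)) l := by
      intro l hl
      obtain ⟨y, hy, hcol⟩ := hlhs i (gstar T i) (gstar_weak T i)
        (fun γ' hγ' => gstar_min T i hγ') (rowElt T (i+1) l) ((inRow_iff T).2 ⟨l, hl, rfl⟩)
      obtain ⟨j', hj', rfl⟩ := (inRow_iff T).1 hy
      rw [gstar_A T i hj', gstar_B T i hl] at hcol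
      simp only [colAT, colBT] at hcol
      exact ⟨j', hj', hcol⟩
    have hct := covering_tableau (rowElt T i) (rowElt T (i+1)) (rowLen T i) (rowLen T (i+1))
      (fun j j' h1 h2 => rowElt_mono T i j j' h1 h2) hcov
    have hjm : j < rowLen T i := lt_of_lt_of_le hj hct.1
    refine ⟨rowElt T i j, rowElt_spec T hjm, ?_⟩
    rw [← hxB]
    exact hct.2 j hj
  · -- tableau → highest weight
    intro hrhs r γ hw hmin x hx
    have htab : ∀ l, l < rowLen T (r+1) → l < rowLen T r ∧
        ¬ rowElt T (r+1) l < rowElt T r l := by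
      intro l hl
      obtain ⟨y, hy, hnlt⟩ := hrhs r l (rowElt T (r+1) l) (rowElt_spec T hl)
      have hlm : l < rowLen T r := entry_lt_rowLen T hy
      have hye : rowElt T r l = y := rowElt_eq T hy
      rw [← hye] at hnlt
      exact ⟨hlm, hnlt⟩
    have hItab : Itab (rowElt T r) (rowElt T (r+1)) (rowLen T r) (rowLen T (r+1)) 0 0 := by
      intro l h0 hl
      have h1 := htab l hl
      have he : (0 : ℕ) + (l - 0) = l := by omega
      rw [he]
      exact h1
    obtain ⟨l, hl, rfl⟩ := (inRow_iff T).1 hx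
    obtain ⟨j', hj', hcol⟩ := tableau_covering (rowElt T r) (rowElt T (r+1)) (rowLen T r)
      (rowLen T (r+1)) hItab l hl
    have hyin : InRow T r (rowElt T r j') := (inRow_iff T).2 ⟨j', hj', rfl⟩
    have hxin : InRow T (r+1) (rowElt T (r+1) l) := (inRow_iff T).2 ⟨l, hl, rfl⟩
    refine ⟨rowElt T r j', hyin, ?_⟩
    have e1 : γ (rowElt T r j') = gstar T r (rowElt T r j') :=
      le_antisymm (hmin (gstar T r) (gstar_weak T r) _ (Or.inl hyin))
        (gstar_min T r hw _ (Or.inl hyin))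
    have e2 : γ (rowElt T (r+1) l) = gstar T r (rowElt T (r+1) l) :=
      le_antisymm (hmin (gstar T r) (gstar_weak T r) _ (Or.inr hxin))
        (gstar_min T r hw _ (Or.inr hxin))
    rw [e1, e2, gstar_A T r hj', gstar_B T r hl]
    simp only [colAT, colBT]
    exact hcol
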